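/- Let C_f ∈ K(n, m, β_2, …, β_g) be a plane branch with finite Zariski invariant λ_f, such that I(f, x) = n and I(f, y) = m; set e_1 = gcd(n,m), n_1 = n/e_1, m_1 = m/e_1, and let C_h ∈ B ⊂ K(n_1, m_1) be defined by a monic polynomial h ∈ ℂ{x}[y] of degree n_1 with I(C_f, C_h) = (n_1 − 1)m + λ_f. Then: (a) I(h, x) = n_1 and I(h, y) = m_1; (b) in the h-adic expansion f = h^{e_1} + Σ_{k=0}^{e_1−1} A_k h^k with A_k ∈ ℂ{x}[y], deg_y(A_k) < n_1, one has I(f, h) = I(A_0, h) = (n_1 − 1)m + λ_f; and (c) there exist p, q ∈ ℕ with 0 ≤ q < n_1 such that p·n_1 + q·m_1 = (n_1 − 1)m + λ_f. -/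

import Mathlib

open scoped Classical

noncomputable section

/-- A plane branch `C_f`, encoded by a primitive Puiseux parametrization
`(t^n, Σ_{i>n} (a i) t^i)` which is transversal to `{x = 0}`. -/
structure Branch where
  /-- the multiplicity `n = mult(C_f)` -/
  n : ℕ
  npos : 0 < n
  /-- the coefficients of the Puiseux parametrization -/
  a : ℕ → ℂ
  /-- transversality of `{x = 0}`: the `y`-component has order `> n` -/
  lowZero : ∀ i ≤ n, a i = 0
  /-- the parametrization is primitive -/
  primitive : ∀ d : ℕ, d ∣ n → (∀ i, a i ≠ 0 → d ∣ i) → d = 1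

namespace Branch

/-- The `x`-component `t^n` of the parametrization. -/
def paramX (F : Branch) : PowerSeries ℂ := PowerSeries.X ^ F.n

/-- The `y`-component `Σ_{i>n} (a i) t^i` of the parametrization. -/
def paramY (F : Branch) : PowerSeries ℂ := PowerSeries.mk F.a

/-- The pair `(β_j, e_j)` of the characteristic sequence and the gcd sequence:
`β_0 = e_0 = n`, `β_{j+1} = min { i | a i ≠ 0 ∧ e_j ∤ i }`, `e_{j+1} = gcd (e_j, β_{j+1})`. -/
def charData (F : Branch) : ℕ → ℕ × ℕ
  | 0 => (F.n, F.n)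
  | j + 1 =>
      let b := sInf {i | F.a i ≠ 0 ∧ ¬ (F.charData j).2 ∣ i}
      (b, Nat.gcd (F.charData j).2 b)

/-- The characteristic sequence `β_j`; `β_0 = n`, `β_1 = m`. -/
def beta (F : Branch) (j : ℕ) : ℕ := (F.charData j).1

/-- The gcd sequence `e_j = gcd(β_0, …, β_j)`. -/
def e (F : Branch) (j : ℕ) : ℕ := (F.charData j).2

/-- The genus `g`: the first index with `e_g = 1`. -/
def genus (F : Branch) : ℕ := sInf {g | F.e g = 1}

/-- The minimal system of generators `v_0 < v_1 < ⋯ < v_g` of the value semigroup: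
`v_0 = n`, `v_1 = β_1`, `v_j = (e_{j-2}/e_{j-1}) v_{j-1} + β_j - β_{j-1}`. -/
def v (F : Branch) : ℕ → ℕ
  | 0 => F.n
  | 1 => F.beta 1
  | j + 2 => F.e j / F.e (j + 1) * F.v (j + 1) + F.beta (j + 2) - F.beta (j + 1)

/-- The coefficient at the rational exponent `q` of the Newton–Puiseux root indexed by `j`,
namely of `α_j(x) = Σ_i (a i) ε^{ij} x^{i/n}` with `ε = exp(2πI/n)`. -/
def rootCoeff (F : Branch) (j : ℕ) (q : ℚ) : ℂ :=
  if h : ∃ i : ℕ, (i : ℚ) = q * F.n then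
    F.a h.choose * Complex.exp (2 * Real.pi * Complex.I * j * h.choose / F.n)
  else 0

/-- The order `mult(α_j - δ_l)` of the difference of the `j`-th Newton–Puiseux root of `F`
and the `l`-th root of `G` (a rational number, `⊤` if the roots coincide). -/
def rootDiffOrder (F G : Branch) (j l : ℕ) : WithTop ℚ :=
  if h : ∃ k : ℕ, F.rootCoeff j ((k : ℚ) / (F.n * G.n)) ≠ G.rootCoeff l ((k : ℚ) / (F.n * G.n))
  then (((Nat.find h : ℚ) / (F.n * G.n) : ℚ) : WithTop ℚ)
  else ⊤

/-- The contact order `cont(C_F, C_G) = max_{j,l} mult(α_j - δ_l)` of two branches. -/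
def contact (F G : Branch) : WithTop ℚ :=
  haveI : Nonempty (Fin F.n × Fin G.n) := ⟨⟨0, F.npos⟩, ⟨0, G.npos⟩⟩
  Finset.sup' Finset.univ Finset.univ_nonempty fun p : Fin F.n × Fin G.n =>
    F.rootDiffOrder G p.1 p.2

/-- The intersection multiplicity `I(C_F, C_G) = dim_ℂ ℂ{x,y}/⟨f,g⟩`, computed as
`Σ_{j,l} mult(α_j - δ_l)` over all pairs of Newton–Puiseux roots. -/
def inter (F G : Branch) : WithTop ℚ :=
  ∑ p : Fin F.n × Fin G.n, F.rootDiffOrder G p.1 p.2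

/-- Pullback of a plane curve (here, with polynomial equation `h`) under the
parametrization of `F`: `h(t^n, Σ a_i t^i)`. -/
def pullbackPoly (F : Branch) (h : MvPolynomial (Fin 2) ℂ) : PowerSeries ℂ :=
  MvPolynomial.aeval ![F.paramX, F.paramY] h

/-- The value semigroup `Γ_F = { I(f,h) | f ∤ h }`, realized as the set of `t`-orders of the
nonzero pullbacks `h(t^n, Σ a_i t^i)`. -/
def gamma (F : Branch) : Set ℕ :=
  {d | ∃ h : MvPolynomial (Fin 2) ℂ, F.pullbackPoly h ≠ 0 ∧ (F.pullbackPoly h).order = (d : ℕ∞)}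

end Branch

/-- Substitution `φ(ρ(t))` of a power series `ρ` (with `ρ(0) = 0`) into a one-variable power
series `φ`. -/
def substt (ρ φ : PowerSeries ℂ) : PowerSeries ℂ :=
  PowerSeries.mk fun k =>
    ∑ i ∈ Finset.range (k + 1), PowerSeries.coeff (R := ℂ) i φ * PowerSeries.coeff (R := ℂ) k (ρ ^ i)

/-- Substitution `σ(u(t), v(t))` of two one-variable power series `u, v` (with
`u(0) = v(0) = 0`) into a two-variable power series `σ`. -/
def subst2 (u v : PowerSeries ℂ) (σ : MvPowerSeries (Fin 2) ℂ) : PowerSeries ℂ :=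
  PowerSeries.mk fun k =>
    ∑ p ∈ Finset.range (k + 1) ×ˢ Finset.range (k + 1),
      MvPowerSeries.coeff (R := ℂ) (Finsupp.single 0 p.1 + Finsupp.single 1 p.2) σ *
        PowerSeries.coeff (R := ℂ) k (u ^ p.1 * v ^ p.2)

namespace Branch

/-- Analytic equivalence of plane branches: there are a (formal) change of coordinates
`σ = (σ₁, σ₂)` of `(ℂ², 0)` (zero constant terms, invertible Jacobian at `0`) and a change of
parameter `ρ` (with `ord ρ = 1`) such that `σ ∘ φ_F ∘ ρ = φ_G`. -/
def AEquiv (F G : Branch) : Prop :=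
  ∃ σ₁ σ₂ : MvPowerSeries (Fin 2) ℂ, ∃ ρ : PowerSeries ℂ,
    MvPowerSeries.constantCoeff (σ := Fin 2) (R := ℂ) σ₁ = 0 ∧
    MvPowerSeries.constantCoeff (σ := Fin 2) (R := ℂ) σ₂ = 0 ∧
    MvPowerSeries.coeff (R := ℂ) (Finsupp.single 0 1) σ₁ *
        MvPowerSeries.coeff (R := ℂ) (Finsupp.single 1 1) σ₂ -
      MvPowerSeries.coeff (R := ℂ) (Finsupp.single 1 1) σ₁ *
        MvPowerSeries.coeff (R := ℂ) (Finsupp.single 0 1) σ₂ ≠ 0 ∧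
    PowerSeries.constantCoeff (R := ℂ) ρ = 0 ∧ PowerSeries.coeff (R := ℂ) 1 ρ ≠ 0 ∧
    subst2 (substt ρ F.paramX) (substt ρ F.paramY) σ₁ = G.paramX ∧
    subst2 (substt ρ F.paramX) (substt ρ F.paramY) σ₂ = G.paramY

/-- `F` is the branch `y^n - x^m = 0`, i.e. has Puiseux parametrization `(t^n, t^m)`. -/
def IsMonomial (F : Branch) (n m : ℕ) : Prop :=
  F.n = n ∧ ∀ i, F.a i = if i = m then 1 else 0

/-- `F` belongs to the family `B ⊆ K(n₁, m₁)` of plane branches analytically equivalent to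
`y^{n₁} - x^{m₁} = 0`. -/
def InFamilyB (n₁ m₁ : ℕ) (F : Branch) : Prop :=
  ∃ M : Branch, M.IsMonomial n₁ m₁ ∧ F.AEquiv M

/-- `lam` is the (finite) Zariski invariant `λ_F` of `F`: the branch `F` is analytically
equivalent to a branch with Puiseux parametrization
`(t^n, t^m + b t^lam + Σ_{i>lam} b_i t^i)` with `b ≠ 0` and `lam + n ∉ Γ_F`,
where `m = β_1`. -/
def HasZariskiInvariant (F : Branch) (lam : ℕ) : Prop :=
  ∃ G : Branch, F.AEquiv G ∧ G.n = F.n ∧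
    (∀ i < F.beta 1, G.a i = 0) ∧ G.a (F.beta 1) = 1 ∧
    (∀ i, F.beta 1 < i → i < lam → G.a i = 0) ∧
    G.a lam ≠ 0 ∧ lam + F.n ∉ F.gamma

end Branch

/-- The pullback `Σ_j c_j(t^n) y(t)^j` of a curve `f = Σ_j c_j(x) y^j ∈ ℂ{x}[y]` under a
parametrization `(t^n, y(t))`. -/
def pullbackWeierstrass (n : ℕ) (y : PowerSeries ℂ) (f : Polynomial (PowerSeries ℂ)) :
    PowerSeries ℂ :=
  ∑ j ∈ Finset.range (f.natDegree + 1), substt (PowerSeries.X ^ n) (f.coeff j) * y ^ j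

/-- `f ∈ ℂ{x}[y]` is a Weierstrass polynomial of degree `n`. -/
def IsWeierstrass (f : Polynomial (PowerSeries ℂ)) (n : ℕ) : Prop :=
  f.Monic ∧ f.natDegree = n ∧ ∀ j < n, PowerSeries.constantCoeff (R := ℂ) (f.coeff j) = 0

end
noncomputable section

/-- substitution x ↦ x^n on power series, as a function -/
def phiFun (n : ℕ) (f : PowerSeries ℂ) : PowerSeries ℂ :=
  PowerSeries.mk fun k => if n ∣ k then PowerSeries.coeff (R := ℂ) (k / n) f else 0

lemma phiFun_coeff (n : ℕ) (f : PowerSeries ℂ) (k : ℕ) :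
    PowerSeries.coeff (R := ℂ) k (phiFun n f) = if n ∣ k then PowerSeries.coeff (R := ℂ) (k / n) f else 0 := by
  simp [phiFun]

lemma phiFun_coeff_mul (n : ℕ) (hn : 0 < n) (f : PowerSeries ℂ) (c : ℕ) :
    PowerSeries.coeff (R := ℂ) (n * c) (phiFun n f) = PowerSeries.coeff (R := ℂ) c f := by
  rw [phiFun_coeff, if_pos ⟨c, rfl⟩, Nat.mul_div_cancel_left _ hn]

lemma phiFun_add (n : ℕ) (f g : PowerSeries ℂ) :
    phiFun n (f + g) = phiFun n f + phiFun n g := by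
  ext k
  simp only [phiFun_coeff, map_add]
  split <;> simp

lemma phiFun_one (n : ℕ) (hn : 0 < n) : phiFun n 1 = 1 := by
  ext k
  rw [phiFun_coeff]
  rcases Nat.eq_zero_or_pos k with rfl | hk
  · simp
  · have h1 : (PowerSeries.coeff (R := ℂ) k) (1 : PowerSeries ℂ) = 0 := by
      rw [PowerSeries.coeff_one, if_neg hk.ne']
    rw [h1]
    split
    · rename_i h
      obtain ⟨c, rfl⟩ := h
      have hc : c ≠ 0 := by rintro rfl; simp at hk
      rw [Nat.mul_div_cancel_left _ hn, PowerSeries.coeff_one, if_neg hc]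
    · rfl

lemma phiFun_mul (n : ℕ) (hn : 0 < n) (f g : PowerSeries ℂ) :
    phiFun n (f * g) = phiFun n f * phiFun n g := by
  ext k
  rw [PowerSeries.coeff_mul, phiFun_coeff]
  by_cases hk : n ∣ k
  · obtain ⟨c, rfl⟩ := hk
    rw [if_pos ⟨c, rfl⟩, Nat.mul_div_cancel_left _ hn, PowerSeries.coeff_mul]
    have emb : Function.Injective (fun p : ℕ × ℕ => (n * p.1, n * p.2)) := by
      intro p q h; simp only [Prod.mk.injEq] at h
      exact Prod.ext (Nat.eq_of_mul_eq_mul_left hn h.1) (Nat.eq_of_mul_eq_mul_left hn h.2)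
    have key : ∑ p ∈ Finset.HasAntidiagonal.antidiagonal c,
        PowerSeries.coeff (R := ℂ) p.1 f * PowerSeries.coeff (R := ℂ) p.2 g
        = ∑ p ∈ (Finset.HasAntidiagonal.antidiagonal c).map ⟨_, emb⟩,
            PowerSeries.coeff (R := ℂ) p.1 (phiFun n f) * PowerSeries.coeff (R := ℂ) p.2 (phiFun n g) := by
      rw [Finset.sum_map]
      refine Finset.sum_congr rfl fun p _ => ?_
      simp only [Function.Embedding.coeFn_mk]
      rw [phiFun_coeff_mul n hn, phiFun_coeff_mul n hn]
    rw [key]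
    refine Finset.sum_subset ?_ ?_
    · intro p hp
      simp only [Finset.mem_map, Function.Embedding.coeFn_mk, Finset.HasAntidiagonal.mem_antidiagonal] at hp ⊢
      obtain ⟨q, hq, hq2⟩ := hp
      rw [← hq2]
      show n * q.1 + n * q.2 = n * c
      rw [← Nat.mul_add, hq]
    · intro p hp hnp
      simp only [Finset.HasAntidiagonal.mem_antidiagonal] at hp
      by_cases h1 : n ∣ p.1
      · exfalso
        apply hnp
        have h2 : n ∣ p.2 := (Nat.dvd_add_right h1).mp ⟨c, hp⟩
        obtain ⟨a, ha⟩ := h1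
        obtain ⟨b, hb⟩ := h2
        simp only [Finset.mem_map, Function.Embedding.coeFn_mk]
        refine ⟨(a, b), ?_, ?_⟩
        · simp only [Finset.HasAntidiagonal.mem_antidiagonal]
          refine Nat.eq_of_mul_eq_mul_left hn ?_
          rw [Nat.mul_add, ← ha, ← hb]; exact hp
        · show (n * a, n * b) = p
          rw [← ha, ← hb]
      · rw [phiFun_coeff, if_neg h1, zero_mul]
  · rw [if_neg hk]
    refine (Finset.sum_eq_zero ?_).symm
    intro p hp
    simp only [Finset.HasAntidiagonal.mem_antidiagonal] at hp
    by_cases h1 : n ∣ p.1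
    · have h2 : ¬ n ∣ p.2 := fun h => hk (hp ▸ Nat.dvd_add h1 h)
      rw [phiFun_coeff (f := g), if_neg h2, mul_zero]
    · rw [phiFun_coeff, if_neg h1, zero_mul]

/-- substitution x ↦ x^n as a ring hom (for n > 0) -/
def phiHom (n : ℕ) (hn : 0 < n) : PowerSeries ℂ →+* PowerSeries ℂ where
  toFun := phiFun n
  map_one' := phiFun_one n hn
  map_mul' := phiFun_mul n hn
  map_zero' := by ext k; simp [phiFun_coeff]
  map_add' := phiFun_add n

lemma phiHom_apply (n : ℕ) (hn : 0 < n) (f : PowerSeries ℂ) :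
    phiHom n hn f = phiFun n f := rfl

lemma phiFun_comp (a b : ℕ) (ha : 0 < a) (hb : 0 < b) (f : PowerSeries ℂ) :
    phiFun a (phiFun b f) = phiFun (b * a) f := by
  ext k
  simp only [phiFun_coeff]
  by_cases h : a ∣ k
  · rw [if_pos h]
    obtain ⟨c, rfl⟩ := h
    by_cases h2 : b ∣ c
    · rw [Nat.mul_div_cancel_left _ ha, if_pos h2, if_pos (by
        obtain ⟨d, rfl⟩ := h2; exact ⟨d, by ring⟩)]
      congr 1
      rw [mul_comm a c, Nat.mul_div_mul_right _ _ ha]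
    · rw [Nat.mul_div_cancel_left _ ha, if_neg h2, if_neg]
      rintro ⟨d, hd⟩
      exact h2 ⟨d, by nlinarith⟩
  · rw [if_neg h, if_neg]
    rintro ⟨d, rfl⟩
    exact h ⟨b * d, by ring⟩

lemma phiFun_order (n : ℕ) (hn : 0 < n) (f : PowerSeries ℂ) (w : ℕ)
    (hw : f.order = (w : ℕ∞)) : (phiFun n f).order = ((n * w : ℕ) : ℕ∞) := by
  rw [PowerSeries.order_eq_nat] at hw ⊢
  obtain ⟨h1, h2⟩ := hw
  refine ⟨by rwa [phiFun_coeff_mul n hn], ?_⟩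
  intro i hi
  rw [phiFun_coeff]
  split
  · rename_i h
    obtain ⟨c, rfl⟩ := h
    rw [Nat.mul_div_cancel_left _ hn]
    exact h2 c (by nlinarith)
  · rfl
end
noncomputable section
open PowerSeries

lemma substt_X_pow (n : ℕ) (hn : 0 < n) (φ : PowerSeries ℂ) :
    substt (PowerSeries.X ^ n) φ = phiFun n φ := by
  ext k
  rw [phiFun_coeff]
  simp only [substt, PowerSeries.coeff_mk]
  have hco : ∀ i : ℕ, PowerSeries.coeff (R := ℂ) k ((PowerSeries.X ^ n : PowerSeries ℂ) ^ i)
      = if k = n * i then 1 else 0 := by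
    intro i; rw [← pow_mul, PowerSeries.coeff_X_pow]
  by_cases h : n ∣ k
  · obtain ⟨c, rfl⟩ := h
    rw [if_pos ⟨c, rfl⟩, Nat.mul_div_cancel_left _ hn]
    rw [Finset.sum_eq_single c (fun i _ hne => by
        rw [hco, if_neg (fun hh => hne (Nat.eq_of_mul_eq_mul_left hn hh.symm)), mul_zero])
      (fun hc => absurd (Finset.mem_range.mpr
        (Nat.lt_succ_of_le (Nat.le_mul_of_pos_left c hn))) hc),
      hco, if_pos rfl, mul_one]
  · rw [if_neg h]
    refine Finset.sum_eq_zero fun i hi => ?_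
    rw [hco, if_neg (fun hh => h ⟨i, hh⟩), mul_zero]

lemma pullbackW_eq_eval₂ (n : ℕ) (hn : 0 < n) (y : PowerSeries ℂ)
    (f : Polynomial (PowerSeries ℂ)) :
    pullbackWeierstrass n y f = f.eval₂ (phiHom n hn) y := by
  rw [Polynomial.eval₂_eq_sum_range, pullbackWeierstrass]
  exact Finset.sum_congr rfl fun j _ => by rw [substt_X_pow n hn, phiHom_apply]

/-- h-adic expansion -/
lemma hadic_expansion (h : Polynomial (PowerSeries ℂ)) (hm : h.Monic) (d : ℕ) (hd : 0 < d)
    (hdeg : h.natDegree = d) :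
    ∀ (e : ℕ) (f : Polynomial (PowerSeries ℂ)), f.Monic → f.natDegree = e * d →
    ∃ A : ℕ → Polynomial (PowerSeries ℂ), (∀ k, (A k).degree < (d : ℕ)) ∧
      f = h ^ e + ∑ k ∈ Finset.range e, A k * h ^ k := by
  intro e
  induction e with
  | zero =>
    intro f hf hfd
    refine ⟨0, fun k => ?_, ?_⟩
    · show (0 : Polynomial (PowerSeries ℂ)).degree < (d : ℕ)
      rw [Polynomial.degree_zero]
      exact WithBot.bot_lt_coe d
    · simp only [Nat.zero_mul] at hfd
      have : f = 1 := hf.natDegree_eq_zero.mp hfd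
      simp [this]
  | succ e ih =>
    intro f hf hfd
    have hne : h ≠ 0 := hm.ne_zero
    have hdegh : h.degree = (d : WithBot ℕ) := by
      rw [Polynomial.degree_eq_natDegree hne, hdeg]
    have hfe : f = f %ₘ h + h * (f /ₘ h) := (Polynomial.modByMonic_add_div f h).symm
    have hqd : (f /ₘ h).natDegree = e * d := by
      rw [Polynomial.natDegree_divByMonic f hm, hfd, hdeg, Nat.succ_mul]
      omega
    have hrd : (f %ₘ h).degree < (d : WithBot ℕ) := by
      rw [← hdegh]; exact Polynomial.degree_modByMonic_lt f hm
    have hq : (f /ₘ h).Monic := by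
      have hq0 : f /ₘ h ≠ 0 := by
        intro hq0
        rw [hq0, mul_zero, add_zero] at hfe
        have : f.degree < (d : WithBot ℕ) := hfe ▸ hrd
        rw [Polynomial.degree_eq_natDegree hf.ne_zero, hfd] at this
        have := WithBot.coe_lt_coe.mp this
        nlinarith [Nat.succ_mul e d]
      have h1 : (h * (f /ₘ h)).natDegree = (e + 1) * d := by
        rw [Polynomial.natDegree_mul hne hq0, hdeg, hqd]; ring
      have hcoeff : f.coeff ((e+1)*d) = (h * (f /ₘ h)).coeff ((e+1)*d) := by
        conv_lhs => rw [hfe]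
        rw [Polynomial.coeff_add, Polynomial.coeff_eq_zero_of_degree_lt
          (lt_of_lt_of_le hrd (by exact_mod_cast Nat.le_mul_of_pos_left d (Nat.succ_pos e))),
          zero_add]
      have h2 : f.leadingCoeff = (h * (f /ₘ h)).leadingCoeff := by
        rwa [Polynomial.leadingCoeff, Polynomial.leadingCoeff, hfd, h1]
      have h3 : (h * (f /ₘ h)).leadingCoeff = (f /ₘ h).leadingCoeff := by
        rw [Polynomial.leadingCoeff_mul, hm.leadingCoeff, one_mul]
      rw [Polynomial.Monic, ← h3, ← h2]; exact hf
    obtain ⟨A', hA'deg, hA'⟩ := ih (f /ₘ h) hq hqd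
    refine ⟨fun k => match k with | 0 => f %ₘ h | k + 1 => A' k, fun k => ?_, ?_⟩
    · match k with
      | 0 => exact hrd
      | k + 1 => exact hA'deg k
    · conv_lhs => rw [hfe, hA']
      rw [Finset.sum_range_succ']
      simp only [pow_zero, mul_one]
      have hsum : h * ∑ k ∈ Finset.range e, A' k * h ^ k
          = ∑ k ∈ Finset.range e, A' k * h ^ (k + 1) := by
        rw [Finset.mul_sum]
        exact Finset.sum_congr rfl fun k _ => by ring
      rw [mul_add, hsum]
      ring
end
noncomputable section
open PowerSeries

lemma two_pi_I_ne_zero : (2 * (Real.pi : ℂ) * Complex.I) ≠ 0 := by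
  simp [Real.pi_ne_zero, Complex.I_ne_zero, Complex.ofReal_ne_zero]

lemma exp_two_pi_int (m : ℤ) : Complex.exp (2 * (Real.pi : ℂ) * Complex.I * m) = 1 := by
  rw [Complex.exp_eq_one_iff]
  exact ⟨m, by ring⟩

lemma exp_ratio_eq_one_iff (a : ℤ) (n : ℕ) (hn : 0 < n) :
    Complex.exp (2 * (Real.pi : ℂ) * Complex.I * a / n) = 1 ↔ (n : ℤ) ∣ a := by
  rw [Complex.exp_eq_one_iff]
  constructor
  · rintro ⟨m, hm⟩
    have hne : (n : ℂ) ≠ 0 := Nat.cast_ne_zero.mpr hn.ne'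
    have : (a : ℂ) = (m : ℂ) * n := by
      field_simp at hm
      have h2 : (2 * (Real.pi : ℂ) * Complex.I) * a = (2 * (Real.pi : ℂ) * Complex.I) * (m * n) := by
        ring_nf
        ring_nf at hm
        linear_combination (2 * (Real.pi : ℂ) * Complex.I) * hm
      have := mul_left_cancel₀ two_pi_I_ne_zero h2
      exact this
    have : (a : ℂ) = ((m * n : ℤ) : ℂ) := by push_cast; exact this
    have := Int.cast_injective this
    exact ⟨m, by linarith [this]⟩
  · rintro ⟨m, rfl⟩
    refine ⟨m, ?_⟩
    have hne : (n : ℂ) ≠ 0 := Nat.cast_ne_zero.mpr hn.ne'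
    push_cast
    field_simp
noncomputable section
open PowerSeries

/-- the `j`-th Newton–Puiseux root of `F`, as a power series in `s = x^{1/(F.n * M)}` -/
def aser (F : Branch) (M : ℕ) (j : ℕ) : PowerSeries ℂ :=
  PowerSeries.mk fun k => F.rootCoeff j ((k : ℚ) / ((F.n : ℚ) * (M : ℚ)))

lemma aser_coeff (F : Branch) (M : ℕ) (hM : 0 < M) (j k : ℕ) :
    PowerSeries.coeff (R := ℂ) k (aser F M j) =
      if M ∣ k then F.a (k / M) *
        Complex.exp (2 * (Real.pi : ℂ) * Complex.I * j * ((k / M : ℕ) : ℂ) / (F.n : ℂ))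
      else 0 := by
  rw [aser, PowerSeries.coeff_mk, Branch.rootCoeff]
  have hn : (F.n : ℚ) ≠ 0 := Nat.cast_ne_zero.mpr F.npos.ne'
  have hMq : (M : ℚ) ≠ 0 := Nat.cast_ne_zero.mpr hM.ne'
  have hq : (k : ℚ) / ((F.n : ℚ) * (M : ℚ)) * (F.n : ℚ) = (k : ℚ) / M := by
    field_simp
  by_cases hdvd : M ∣ k
  · have hex : ∃ i : ℕ, (i : ℚ) = (k : ℚ) / ((F.n : ℚ) * (M : ℚ)) * (F.n : ℚ) := by
      refine ⟨k / M, ?_⟩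
      rw [hq, Nat.cast_div hdvd hMq]
    rw [dif_pos hex, if_pos hdvd]
    have hch : hex.choose = k / M := by
      have h1 : (hex.choose : ℚ) = ((k / M : ℕ) : ℚ) := by
        rw [hex.choose_spec, hq, Nat.cast_div hdvd hMq]
      exact_mod_cast h1
    rw [hch]
  · rw [dif_neg, if_neg hdvd]
    rintro ⟨i, hi⟩
    rw [hq] at hi
    apply hdvd
    refine ⟨i, ?_⟩
    have : (k : ℚ) = (M : ℚ) * i := by
      field_simp at hi
      linarith [hi]
    exact_mod_cast this

lemma aser_zero (F : Branch) (M : ℕ) (hM : 0 < M) :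
    aser F M 0 = phiFun M (PowerSeries.mk F.a) := by
  ext k
  rw [aser_coeff F M hM, phiFun_coeff]
  split
  · simp
  · rfl

lemma aser_congr (F : Branch) (M : ℕ) (hM : 0 < M) (j j' : ℕ)
    (hjj : (F.n : ℤ) ∣ (j : ℤ) - (j' : ℤ)) : aser F M j = aser F M j' := by
  obtain ⟨t, ht⟩ := hjj
  ext k
  rw [aser_coeff F M hM, aser_coeff F M hM]
  split
  · rename_i h
    set i := k / M with hi
    by_cases ha : F.a i = 0
    · rw [ha, zero_mul, zero_mul]
    · congr 1
      have hnc : (F.n : ℂ) ≠ 0 := Nat.cast_ne_zero.mpr F.npos.ne'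
      have key : 2 * (Real.pi : ℂ) * Complex.I * j * (i : ℂ) / (F.n : ℂ)
          = 2 * (Real.pi : ℂ) * Complex.I * j' * (i : ℂ) / (F.n : ℂ)
            + 2 * (Real.pi : ℂ) * Complex.I * ((t * i : ℤ) : ℂ) := by
        have hj : (j : ℂ) = (j' : ℂ) + (F.n : ℂ) * (t : ℂ) := by
          have h0 : ((j : ℤ) : ℂ) - ((j' : ℤ) : ℂ) = ((F.n : ℤ) : ℂ) * ((t : ℤ) : ℂ) := by
            exact_mod_cast congrArg (fun z : ℤ => (z : ℂ)) ht
          push_cast at h0 ⊢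
          linear_combination h0
        rw [hj]
        push_cast
        field_simp
      rw [key, Complex.exp_add, exp_two_pi_int, mul_one]
  · rfl

lemma aser_rescale (F : Branch) (M : ℕ) (hM : 0 < M) (j : ℕ) :
    PowerSeries.rescale (Complex.exp (2 * (Real.pi : ℂ) * Complex.I / ((F.n : ℂ) * (M : ℂ))))
      (aser F M j) = aser F M (j + 1) := by
  ext k
  rw [PowerSeries.coeff_rescale, aser_coeff F M hM, aser_coeff F M hM]
  split
  · rename_i h
    obtain ⟨i, rfl⟩ := h
    rw [Nat.mul_div_cancel_left _ hM]
    have hnc : (F.n : ℂ) ≠ 0 := Nat.cast_ne_zero.mpr F.npos.ne'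
    have hMc : (M : ℂ) ≠ 0 := Nat.cast_ne_zero.mpr hM.ne'
    rw [← Complex.exp_nat_mul]
    rw [mul_comm (F.a i) _, ← mul_assoc, ← Complex.exp_add]
    rw [mul_comm _ (F.a i)]
    congr 2
    push_cast
    field_simp
    ring
  · rw [mul_zero]

lemma phiFun_rescale_fix (c : ℕ) (hc : 0 < c) (g : PowerSeries ℂ) :
    PowerSeries.rescale (Complex.exp (2 * (Real.pi : ℂ) * Complex.I / (c : ℂ)))
      (phiFun c g) = phiFun c g := by
  ext k
  rw [PowerSeries.coeff_rescale, phiFun_coeff]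
  by_cases h : c ∣ k
  · rw [if_pos h]
    obtain ⟨i, rfl⟩ := h
    have hcc : (c : ℂ) ≠ 0 := Nat.cast_ne_zero.mpr hc.ne'
    rw [← Complex.exp_nat_mul]
    have : ((c * i : ℕ) : ℂ) * (2 * (Real.pi : ℂ) * Complex.I / (c : ℂ))
        = 2 * (Real.pi : ℂ) * Complex.I * ((i : ℤ) : ℂ) := by
      push_cast; field_simp
    rw [this, exp_two_pi_int, one_mul]
  · rw [if_neg h, mul_zero]

/-- distinctness of the Newton–Puiseux roots -/
lemma aser_injective (F : Branch) (M : ℕ) (hM : 0 < M) (j j' : ℕ) (hj : j < F.n) (hj' : j' < F.n)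
    (hne : j ≠ j') : aser F M j ≠ aser F M j' := by
  wlog hlt : j' < j generalizing j j'
  · exact fun h => this j' j hj' hj (Ne.symm hne) (by omega) h.symm
  intro heq
  set δ := j - j' with hδ
  have hδpos : 0 < δ := by omega
  have hδlt : δ < F.n := by omega
  have key : ∀ i : ℕ, F.a i ≠ 0 → F.n ∣ δ * i := by
    intro i hai
    have hcoeff := congrArg (PowerSeries.coeff (R := ℂ) (M * i)) heq
    rw [aser_coeff F M hM, aser_coeff F M hM, if_pos ⟨i, rfl⟩, if_pos ⟨i, rfl⟩,
      Nat.mul_div_cancel_left _ hM] at hcoeff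
    have hexp : Complex.exp (2 * (Real.pi : ℂ) * Complex.I * j * (i : ℂ) / (F.n : ℂ))
        = Complex.exp (2 * (Real.pi : ℂ) * Complex.I * j' * (i : ℂ) / (F.n : ℂ)) :=
      mul_left_cancel₀ hai hcoeff
    have h2 : Complex.exp (2 * (Real.pi : ℂ) * Complex.I * j * (i : ℂ) / (F.n : ℂ)
        - 2 * (Real.pi : ℂ) * Complex.I * j' * (i : ℂ) / (F.n : ℂ)) = 1 := by
      rw [Complex.exp_sub, hexp, div_self (Complex.exp_ne_zero _)]
    have h1 : Complex.exp (2 * (Real.pi : ℂ) * Complex.I * (((δ * i : ℕ) : ℤ) : ℂ) / (F.n : ℂ))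
        = 1 := by
      rw [← h2]
      congr 1
      have hd : ((δ : ℕ) : ℂ) = (j : ℂ) - (j' : ℂ) := by
        rw [hδ, Nat.cast_sub hlt.le]
      push_cast
      rw [hd]
      ring
    have := (exp_ratio_eq_one_iff ((δ * i : ℕ) : ℤ) F.n F.npos).mp h1
    exact_mod_cast this
  set g := Nat.gcd F.n δ with hg
  have hgpos : 0 < g := Nat.gcd_pos_of_pos_right _ hδpos
  have hgn : g ∣ F.n := Nat.gcd_dvd_left _ _
  have hgδ : g ∣ δ := Nat.gcd_dvd_right _ _
  have hcop : Nat.Coprime (F.n / g) (δ / g) := Nat.coprime_div_gcd_div_gcd hgpos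
  have hdall : ∀ i : ℕ, F.a i ≠ 0 → (F.n / g) ∣ i := by
    intro i hai
    obtain ⟨c, hc⟩ := key i hai
    have h3 : (δ / g) * i = (F.n / g) * c := by
      refine Nat.eq_of_mul_eq_mul_left hgpos ?_
      rw [← mul_assoc, ← mul_assoc, Nat.mul_div_cancel' hgδ, Nat.mul_div_cancel' hgn]
      exact hc
    exact hcop.dvd_of_dvd_mul_left ⟨c, h3⟩
  have hd1 : F.n / g = 1 := F.primitive _ (Nat.div_dvd_of_dvd hgn) hdall
  have hng : F.n = g := by
    conv_lhs => rw [← Nat.mul_div_cancel' hgn, hd1, Nat.mul_one]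
  have : F.n ∣ δ := hng ▸ hgδ
  exact absurd (Nat.le_of_dvd hδpos this) (by omega)
end
noncomputable section
open PowerSeries

lemma coeff_mul_zero (φ ψ : PowerSeries ℂ) (w1 w2 : ℕ)
    (h1 : ∀ i < w1, PowerSeries.coeff (R := ℂ) i φ = 0) (h2 : ∀ i < w2, PowerSeries.coeff (R := ℂ) i ψ = 0)
    (k : ℕ) (hk : k < w1 + w2) : PowerSeries.coeff (R := ℂ) k (φ * ψ) = 0 := by
  rw [PowerSeries.coeff_mul]
  refine Finset.sum_eq_zero fun p hp => ?_
  simp only [Finset.HasAntidiagonal.mem_antidiagonal] at hp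
  by_cases hp1 : p.1 < w1
  · rw [h1 p.1 hp1, zero_mul]
  · rw [h2 p.2 (by omega), mul_zero]

lemma coeff_pow_zero (φ : PowerSeries ℂ) (w : ℕ)
    (h : ∀ i < w, PowerSeries.coeff (R := ℂ) i φ = 0) :
    ∀ (p k : ℕ), k < p * w → PowerSeries.coeff (R := ℂ) k (φ ^ p) = 0 := by
  intro p
  induction p with
  | zero => intro k hk; omega
  | succ p ih =>
    intro k hk
    rw [pow_succ]
    exact coeff_mul_zero _ _ (p * w) w (fun i hi => ih i hi) h k (by rw [Nat.succ_mul] at hk; omega)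

lemma coeff_pow_leading (ρ : PowerSeries ℂ) (h0 : PowerSeries.coeff (R := ℂ) 0 ρ = 0) :
    ∀ p : ℕ, PowerSeries.coeff (R := ℂ) p (ρ ^ p) = (PowerSeries.coeff (R := ℂ) 1 ρ) ^ p := by
  have hz : ∀ i < 1, PowerSeries.coeff (R := ℂ) i ρ = 0 := by
    intro i hi; interval_cases i; exact h0
  intro p
  induction p with
  | zero => simp
  | succ p ih =>
    rw [pow_succ, PowerSeries.coeff_mul]
    rw [Finset.sum_eq_single (p, 1)]
    · rw [ih, pow_succ]
    · intro q hq hne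
      simp only [Finset.HasAntidiagonal.mem_antidiagonal] at hq
      by_cases hq1 : q.1 < p
      · rw [coeff_pow_zero ρ 1 hz p q.1 (by omega), zero_mul]
      · have : q.2 < 1 := by
          rcases Nat.lt_or_ge q.1 p with h | h
          · omega
          · by_contra hge
            push_neg at hge
            have : q.1 = p ∧ q.2 = 1 := by omega
            exact hne (Prod.ext this.1 this.2)
        interval_cases hq2 : q.2
        rw [h0, mul_zero]
    · intro hmem
      exact absurd (by simp : ((p, 1) : ℕ × ℕ) ∈ Finset.HasAntidiagonal.antidiagonal (p + 1)) hmem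

lemma substt_X_pow_general (ρ : PowerSeries ℂ) (h0 : PowerSeries.coeff (R := ℂ) 0 ρ = 0) (N : ℕ) :
    substt ρ (PowerSeries.X ^ N) = ρ ^ N := by
  ext k
  simp only [substt, PowerSeries.coeff_mk]
  rw [Finset.sum_eq_single N]
  · rw [PowerSeries.coeff_X_pow, if_pos rfl, one_mul]
  · intro i _ hne
    rw [PowerSeries.coeff_X_pow, if_neg hne, zero_mul]
  · intro hN
    rw [PowerSeries.coeff_X_pow, if_pos rfl, one_mul]
    simp only [Finset.mem_range, not_lt] at hN
    exact coeff_pow_zero ρ 1 (fun i hi => by interval_cases i; exact h0) N k (by omega)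

/-- factorization of a monic polynomial with enough distinct roots, over a domain -/
lemma monic_factorization {R : Type*} [CommRing R] [IsDomain R] :
    ∀ (n : ℕ) (p : Polynomial R), p.Monic → p.natDegree = n →
    ∀ (r : ℕ → R), (∀ j, j < n → p.IsRoot (r j)) →
      (∀ j j', j < n → j' < n → j ≠ j' → r j ≠ r j') →
    p = ∏ j ∈ Finset.range n, (Polynomial.X - Polynomial.C (r j)) := by
  intro n
  induction n with
  | zero =>
    intro p hm hdeg r _ _
    rw [Finset.range_zero, Finset.prod_empty]
    exact hm.natDegree_eq_zero.mp hdeg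
  | succ n ih =>
    intro p hm hdeg r hroot hinj
    have hdvd : (Polynomial.X - Polynomial.C (r n)) ∣ p :=
      Polynomial.dvd_iff_isRoot.mpr (hroot n (Nat.lt_succ_self n))
    obtain ⟨q, hq⟩ := hdvd
    have hXm : (Polynomial.X - Polynomial.C (r n)).Monic := Polynomial.monic_X_sub_C (r n)
    have hqm : q.Monic := by
      have := hq ▸ hm
      exact hXm.of_mul_monic_left this
    have hqdeg : q.natDegree = n := by
      have h1 : p.natDegree = (Polynomial.X - Polynomial.C (r n)).natDegree + q.natDegree := by
        rw [hq, Polynomial.natDegree_mul hXm.ne_zero hqm.ne_zero]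
      rw [hdeg, Polynomial.natDegree_X_sub_C] at h1
      omega
    have hqroot : ∀ j, j < n → q.IsRoot (r j) := by
      intro j hj
      have h1 : p.eval (r j) = 0 := hroot j (by omega)
      rw [hq, Polynomial.eval_mul, Polynomial.eval_sub, Polynomial.eval_X,
        Polynomial.eval_C] at h1
      rcases mul_eq_zero.mp h1 with h2 | h2
      · exact absurd (sub_eq_zero.mp h2) (hinj j n (by omega) (by omega) (by omega))
      · exact h2
    have := ih q hqm hqdeg r hqroot (fun j j' hj hj' hne => hinj j j' (by omega) (by omega) hne)
    rw [Finset.prod_range_succ, ← this, hq]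
    ring

lemma order_prod {ι : Type*} (s : Finset ι) (f : ι → PowerSeries ℂ) :
    (∏ i ∈ s, f i).order = ∑ i ∈ s, (f i).order := by
  classical
  induction s using Finset.cons_induction with
  | empty => simp [PowerSeries.order_one]
  | cons a s ha ih =>
    rw [Finset.prod_cons, Finset.sum_cons, PowerSeries.order_mul, ih]

lemma withtop_sum_coe {ι : Type*} (s : Finset ι) (f : ι → ℚ) :
    (∑ i ∈ s, ((f i : WithTop ℚ))) = ((∑ i ∈ s, f i : ℚ) : WithTop ℚ) := by
  classical
  induction s using Finset.cons_induction with
  | empty => simp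
  | cons a s ha ih => rw [Finset.sum_cons, Finset.sum_cons, WithTop.coe_add, ih]

lemma withtop_sum_eq_top {ι : Type*} (s : Finset ι) (f : ι → WithTop ℚ) (i : ι) (hi : i ∈ s)
    (h : f i = ⊤) : ∑ j ∈ s, f j = ⊤ := by
  classical
  rw [← Finset.add_sum_erase s f hi, h, top_add]

lemma find_congr {p q : ℕ → Prop} [DecidablePred p] [DecidablePred q]
    (hp : ∃ n, p n) (hq : ∃ n, q n) (h : ∀ n, p n ↔ q n) :
    Nat.find hp = Nat.find hq := by
  refine le_antisymm ?_ ?_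
  · exact Nat.find_min' hp ((h _).mpr (Nat.find_spec hq))
  · exact Nat.find_min' hq ((h _).mp (Nat.find_spec hp))

set_option maxHeartbeats 1000000 in
/-- Let `C_F` be a plane branch with finite Zariski invariant `λ_F`, Weierstrass polynomial
`f` with `I(f, x) = n`, `I(f, y) = m`, and let `C_H ∈ B ⊆ K(n₁, m₁)` be defined by a monic
polynomial `h ∈ ℂ{x}[y]` of degree `n₁` with `I(C_F, C_H) = (n₁ - 1)m + λ_F`.  Then:
(a) `I(h, x) = n₁` and `I(h, y) = m₁`;
(b) in the `h`-adic expansion `f = h^{e₁} + Σ_{k=0}^{e₁-1} A_k h^k` (with `deg_y A_k < n₁`)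
one has `I(f, h) = I(A₀, h) = (n₁ - 1)m + λ_F`;
(c) there are `p, q ∈ ℕ` with `q < n₁` and `p n₁ + q m₁ = (n₁ - 1)m + λ_F`. -/
theorem h_adic_expansion (F : Branch) (lam e₁ n₁ m₁ : ℕ)
    (he₁ : e₁ = Nat.gcd F.n (F.beta 1)) (hn₁ : n₁ = F.n / e₁) (hm₁ : m₁ = F.beta 1 / e₁)
    (hz : F.HasZariskiInvariant lam)
    (f : Polynomial (PowerSeries ℂ)) (hW : IsWeierstrass f F.n)
    (hdef : pullbackWeierstrass F.n F.paramY f = 0)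
    (hIx : F.paramX.order = (F.n : ℕ∞)) (hIy : F.paramY.order = (F.beta 1 : ℕ∞))
    (H : Branch) (hB : Branch.InFamilyB n₁ m₁ H)
    (h : Polynomial (PowerSeries ℂ)) (hmonic : h.Monic) (hdeg : h.natDegree = n₁)
    (hhdef : pullbackWeierstrass n₁ H.paramY h = 0)
    (hI : F.inter H = ((((n₁ - 1) * F.beta 1 + lam : ℕ) : ℚ) : WithTop ℚ)) :
    (H.paramX.order = (n₁ : ℕ∞) ∧ H.paramY.order = (m₁ : ℕ∞)) ∧
    (∃ A : ℕ → Polynomial (PowerSeries ℂ),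
      (∀ k, (A k).degree < (n₁ : ℕ)) ∧
      f = h ^ e₁ + ∑ k ∈ Finset.range e₁, A k * h ^ k ∧
      (pullbackWeierstrass n₁ H.paramY (A 0)).order = (((n₁ - 1) * F.beta 1 + lam : ℕ) : ℕ∞)) ∧
    (∃ p q : ℕ, q < n₁ ∧ p * n₁ + q * m₁ = (n₁ - 1) * F.beta 1 + lam) := by
  classical
  have hn : 0 < F.n := F.npos
  have hN : 0 < H.n := H.npos
  -- facts about β₁ = m
  have hβ := PowerSeries.order_eq_nat.mp hIy
  have haβ : F.a (F.beta 1) ≠ 0 := by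
    simpa [Branch.paramY, PowerSeries.coeff_mk] using hβ.1
  have halow : ∀ i < F.beta 1, F.a i = 0 := by
    intro i hi
    simpa [Branch.paramY, PowerSeries.coeff_mk] using hβ.2 i hi
  have hβn : F.n < F.beta 1 := by
    by_contra hle
    push_neg at hle
    exact haβ (F.lowZero _ hle)
  -- e₁, n₁, m₁ arithmetic
  have he₁pos : 0 < e₁ := he₁ ▸ Nat.gcd_pos_of_pos_left _ hn
  have he₁n : e₁ ∣ F.n := he₁ ▸ Nat.gcd_dvd_left _ _
  have he₁m : e₁ ∣ F.beta 1 := he₁ ▸ Nat.gcd_dvd_right _ _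
  have hn₁e : n₁ * e₁ = F.n := by rw [hn₁]; exact Nat.div_mul_cancel he₁n
  have hm₁e : m₁ * e₁ = F.beta 1 := by rw [hm₁]; exact Nat.div_mul_cancel he₁m
  have hn₁pos : 0 < n₁ := hn₁ ▸ Nat.div_pos (Nat.le_of_dvd hn he₁n) he₁pos
  have hm₁pos : 0 < m₁ := hm₁ ▸ Nat.div_pos (Nat.le_of_dvd (by omega) he₁m) he₁pos
  -- λ > m
  have hβgamma : (F.beta 1 + F.n) ∈ F.gamma := by
    have hpb : F.pullbackPoly (MvPolynomial.X 0 * MvPolynomial.X 1) = F.paramX * F.paramY := by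
      simp [Branch.pullbackPoly, map_mul, MvPolynomial.aeval_X]
    have hord : (F.paramX * F.paramY).order = ((F.beta 1 + F.n : ℕ) : ℕ∞) := by
      rw [PowerSeries.order_mul, hIx, hIy, ← Nat.cast_add, Nat.add_comm]
    refine ⟨_, ?_, by rw [hpb, hord]⟩
    rw [hpb]
    intro h0
    rw [h0, PowerSeries.order_zero] at hord
    exact (ENat.top_ne_coe _) hord
  have hlam : F.beta 1 < lam := by
    obtain ⟨G, _, _, hGlow, hGlam1, _, hGlam, hnot⟩ := hz
    rcases Nat.lt_trichotomy lam (F.beta 1) with hc | hc | hc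
    · exact absurd (hGlow lam hc) hGlam
    · have hmem : lam + F.n ∈ F.gamma := by rw [hc]; exact hβgamma
      exact absurd hmem hnot
    · exact hc
  -- the monomial model branch
  obtain ⟨M, hMmon, hMequiv⟩ := hB
  have hMn : M.n = n₁ := hMmon.1
  have hm₁n₁ : n₁ < m₁ := by
    by_contra hle
    push_neg at hle
    have h1 := M.lowZero m₁ (by omega)
    rw [hMmon.2 m₁, if_pos rfl] at h1
    exact one_ne_zero h1
  have hcop : Nat.Coprime n₁ m₁ := by
    refine M.primitive _ (hMn ▸ Nat.gcd_dvd_left n₁ m₁) ?_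
    intro i hi
    rw [hMmon.2 i] at hi
    by_cases him : i = m₁
    · exact him ▸ Nat.gcd_dvd_right n₁ m₁
    · rw [if_neg him] at hi; exact absurd rfl hi
  -- (a1) : H.n = n₁
  have hHn : H.n = n₁ := by
    obtain ⟨σ₁, σ₂, ρ, h10, h20, hjac, hρ0, hρ1, hEq1, hEq2⟩ := hMequiv
    set u := substt ρ H.paramX with hu
    set v := substt ρ H.paramY with hv
    have hρ0' : PowerSeries.coeff (R := ℂ) 0 ρ = 0 := by
      rwa [PowerSeries.coeff_zero_eq_constantCoeff]
    have hρz : ∀ i < 1, PowerSeries.coeff (R := ℂ) i ρ = 0 := by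
      intro i hi; interval_cases i; exact hρ0'
    have huρ : u = ρ ^ H.n := by
      rw [hu, Branch.paramX]; exact substt_X_pow_general ρ hρ0' H.n
    have hu0 : ∀ i < H.n, PowerSeries.coeff (R := ℂ) i u = 0 := by
      intro i hi; rw [huρ]
      exact coeff_pow_zero ρ 1 hρz H.n i (by omega)
    have huN : PowerSeries.coeff (R := ℂ) H.n u ≠ 0 := by
      rw [huρ, coeff_pow_leading ρ hρ0']
      exact pow_ne_zero _ hρ1
    have hv0 : ∀ i < H.n + 1, PowerSeries.coeff (R := ℂ) i v = 0 := by
      intro i hi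
      simp only [hv, substt, Branch.paramY, PowerSeries.coeff_mk]
      refine Finset.sum_eq_zero fun j hj => ?_
      rw [H.lowZero j (by simp only [Finset.mem_range] at hj; omega), zero_mul]
    have hkey : ∀ σ : MvPowerSeries (Fin 2) ℂ, MvPowerSeries.constantCoeff (σ := Fin 2) (R := ℂ) σ = 0 →
        ∀ k ≤ H.n, PowerSeries.coeff (R := ℂ) k (subst2 u v σ) =
          MvPowerSeries.coeff (R := ℂ) (Finsupp.single 0 1) σ * PowerSeries.coeff (R := ℂ) k u := by
      intro σ hσ0 k hk
      simp only [subst2, PowerSeries.coeff_mk]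
      rw [Finset.sum_eq_single ((1 : ℕ), (0 : ℕ))]
      · norm_num
      · intro p hp hne
        by_cases hp00 : p = (0, 0)
        · subst hp00
          rw [show (Finsupp.single (0 : Fin 2) (0:ℕ) + Finsupp.single (1 : Fin 2) (0:ℕ)) = 0
              by simp, MvPowerSeries.coeff_zero_eq_constantCoeff, hσ0, zero_mul]
        · have hzero : PowerSeries.coeff (R := ℂ) k (u ^ p.1 * v ^ p.2) = 0 := by
            refine coeff_mul_zero _ _ (p.1 * H.n) (p.2 * (H.n + 1))
              (fun i hi => coeff_pow_zero u H.n hu0 p.1 i hi)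
              (fun i hi => coeff_pow_zero v (H.n + 1) hv0 p.2 i hi) k ?_
            have h1 : 2 ≤ p.1 ∨ 1 ≤ p.2 := by
              by_contra hcon
              push_neg at hcon
              obtain ⟨hc1, hc2⟩ := hcon
              have hp2 : p.2 = 0 := by omega
              rcases (by omega : p.1 = 0 ∨ p.1 = 1) with hp1 | hp1
              · exact hp00 (Prod.ext hp1 hp2)
              · exact hne (Prod.ext hp1 hp2)
            rcases h1 with h1 | h1 <;> nlinarith [hN, hk]
          rw [hzero, mul_zero]
      · intro hnm
        have hk0 : k = 0 := by
          by_contra hk0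
          exact hnm (Finset.mem_product.mpr
            ⟨Finset.mem_range.mpr (by omega), Finset.mem_range.mpr (by omega)⟩)
        subst hk0
        simp only [pow_one, pow_zero, mul_one]
        rw [hu0 0 hN, mul_zero]
    have hMX : subst2 u v σ₁ = PowerSeries.X ^ n₁ := by
      rw [hEq1, Branch.paramX, hMn]
    have hMY : subst2 u v σ₂ = PowerSeries.mk M.a := by
      rw [hEq2, Branch.paramY]
    by_contra hneq
    have h1 : MvPowerSeries.coeff (R := ℂ) (Finsupp.single 0 1) σ₁ * PowerSeries.coeff (R := ℂ) H.n u = 0 := by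
      rw [← hkey σ₁ h10 H.n le_rfl, hMX, PowerSeries.coeff_X_pow, if_neg hneq]
    have hσ₁10 : MvPowerSeries.coeff (R := ℂ) (Finsupp.single 0 1) σ₁ = 0 := by
      rcases mul_eq_zero.mp h1 with h2 | h2
      · exact h2
      · exact absurd h2 huN
    have hσ₂10 : MvPowerSeries.coeff (R := ℂ) (Finsupp.single 0 1) σ₂ ≠ 0 := by
      intro h2
      apply hjac
      rw [hσ₁10, h2]
      ring
    have h3 : PowerSeries.coeff (R := ℂ) H.n (subst2 u v σ₂) ≠ 0 := by
      rw [hkey σ₂ h20 H.n le_rfl]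
      exact mul_ne_zero hσ₂10 huN
    have hHm : H.n = m₁ := by
      rw [hMY, PowerSeries.coeff_mk, hMmon.2 H.n] at h3
      by_contra h4
      rw [if_neg h4] at h3
      exact h3 rfl
    have h5 : PowerSeries.coeff (R := ℂ) n₁ (subst2 u v σ₁) = 0 := by
      rw [hkey σ₁ h10 n₁ (by omega), hσ₁10, zero_mul]
    rw [hMX, PowerSeries.coeff_X_pow, if_pos rfl] at h5
    exact one_ne_zero h5
  -- Newton–Puiseux machinery
  have hcoefA : ∀ (j k : ℕ), F.rootCoeff j ((k : ℚ) / (F.n * H.n))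
      = PowerSeries.coeff (R := ℂ) k (aser F H.n j) := by
    intro j k
    rw [aser, PowerSeries.coeff_mk]
  have hcoefD : ∀ (l k : ℕ), H.rootCoeff l ((k : ℚ) / (F.n * H.n))
      = PowerSeries.coeff (R := ℂ) k (aser H F.n l) := by
    intro l k
    rw [aser, PowerSeries.coeff_mk, mul_comm ((H.n : ℚ)) ((F.n : ℚ))]
  have hdiffFin : ∀ j l : ℕ, j < F.n → l < H.n →
      ∃ k, PowerSeries.coeff (R := ℂ) k (aser F H.n j) ≠ PowerSeries.coeff (R := ℂ) k (aser H F.n l) := by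
    intro j l hj hl
    by_contra hcon
    push_neg at hcon
    have htop : Branch.rootDiffOrder F H j l = ⊤ := by
      rw [Branch.rootDiffOrder, dif_neg]
      rintro ⟨k, hk⟩
      exact hk (by rw [hcoefA j k, hcoefD l k, hcon k])
    have hsum : F.inter H = ⊤ := by
      rw [Branch.inter]
      refine withtop_sum_eq_top Finset.univ _ ((⟨j, hj⟩, ⟨l, hl⟩) : Fin F.n × Fin H.n)
        (Finset.mem_univ _) ?_
      simpa using htop
    rw [hI] at hsum
    exact WithTop.coe_ne_top hsum
  have hAper : ∀ j : ℕ, aser F H.n j = aser F H.n (j % F.n) := by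
    intro j
    refine aser_congr F H.n hN j (j % F.n) ⟨(j / F.n : ℕ), ?_⟩
    have hmd := Nat.mod_add_div j F.n
    have h2 : (j : ℤ) = ((j % F.n : ℕ) : ℤ) + (F.n : ℤ) * ((j / F.n : ℕ) : ℤ) := by
      exact_mod_cast hmd.symm
    linarith [h2]
  have hDper : ∀ l : ℕ, aser H F.n l = aser H F.n (l % H.n) := by
    intro l
    refine aser_congr H F.n hn l (l % H.n) ⟨(l / H.n : ℕ), ?_⟩
    have hmd := Nat.mod_add_div l H.n
    have h2 : (l : ℤ) = ((l % H.n : ℕ) : ℤ) + (H.n : ℤ) * ((l / H.n : ℕ) : ℤ) := by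
      exact_mod_cast hmd.symm
    linarith [h2]
  have hdiff : ∀ j l : ℕ,
      ∃ k, PowerSeries.coeff (R := ℂ) k (aser F H.n j) ≠ PowerSeries.coeff (R := ℂ) k (aser H F.n l) := by
    intro j l
    rw [hAper j, hDper l]
    exact hdiffFin _ _ (Nat.mod_lt _ hn) (Nat.mod_lt _ hN)
  set kf : ℕ → ℕ → ℕ := fun j l => Nat.find (hdiff j l) with hkf
  have hkfspec : ∀ j l : ℕ, PowerSeries.coeff (R := ℂ) (kf j l) (aser F H.n j)
      ≠ PowerSeries.coeff (R := ℂ) (kf j l) (aser H F.n l) := fun j l => Nat.find_spec (hdiff j l)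
  have hkfmin : ∀ j l : ℕ, ∀ i < kf j l,
      PowerSeries.coeff (R := ℂ) i (aser F H.n j) = PowerSeries.coeff (R := ℂ) i (aser H F.n l) := by
    intro j l i hi
    have := Nat.find_min (hdiff j l) hi
    push_neg at this
    exact this
  have hkfeq : ∀ (j l c : ℕ),
      (PowerSeries.coeff (R := ℂ) c (aser F H.n j) ≠ PowerSeries.coeff (R := ℂ) c (aser H F.n l)) →
      (∀ i < c, PowerSeries.coeff (R := ℂ) i (aser F H.n j) = PowerSeries.coeff (R := ℂ) i (aser H F.n l)) →
      kf j l = c := by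
    intro j l c h1 h2
    rw [hkf]
    rw [Nat.find_eq_iff]
    exact ⟨h1, fun i hi hne => hne (h2 i hi)⟩
  clear_value kf
  have hrdo : ∀ j l : ℕ, Branch.rootDiffOrder F H j l
      = (((kf j l : ℚ) / ((F.n : ℚ) * (H.n : ℚ)) : ℚ) : WithTop ℚ) := by
    intro j l
    have hex : ∃ k : ℕ, F.rootCoeff j ((k : ℚ) / (F.n * H.n))
        ≠ H.rootCoeff l ((k : ℚ) / (F.n * H.n)) := by
      obtain ⟨k, hk⟩ := hdiff j l
      exact ⟨k, by rw [hcoefA, hcoefD]; exact hk⟩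
    rw [Branch.rootDiffOrder, dif_pos hex]
    have hfind : kf j l = Nat.find hex := by
      refine hkfeq j l (Nat.find hex) ?_ ?_
      · have := Nat.find_spec hex
        rwa [hcoefA, hcoefD] at this
      · intro i hi
        have := Nat.find_min hex hi
        push_neg at this
        rwa [hcoefA, hcoefD] at this
    rw [← hfind]
  have hordAD : ∀ j l : ℕ, (aser H F.n l - aser F H.n j).order = ((kf j l : ℕ) : ℕ∞) := by
    intro j l
    rw [PowerSeries.order_eq_nat]
    constructor
    · rw [map_sub]
      exact sub_ne_zero.mpr (Ne.symm (hkfspec j l))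
    · intro i hi
      rw [map_sub, hkfmin j l i hi, sub_self]
  have hζA : ∀ j k : ℕ, PowerSeries.coeff (R := ℂ) k (aser F H.n (j + 1))
      = (Complex.exp (2 * (Real.pi : ℂ) * Complex.I / ((F.n : ℂ) * (H.n : ℂ)))) ^ k
        * PowerSeries.coeff (R := ℂ) k (aser F H.n j) := by
    intro j k
    rw [← aser_rescale F H.n hN j, PowerSeries.coeff_rescale]
  have hζD : ∀ l k : ℕ, PowerSeries.coeff (R := ℂ) k (aser H F.n (l + 1))
      = (Complex.exp (2 * (Real.pi : ℂ) * Complex.I / ((F.n : ℂ) * (H.n : ℂ)))) ^ k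
        * PowerSeries.coeff (R := ℂ) k (aser H F.n l) := by
    intro l k
    rw [← aser_rescale H F.n hn l, PowerSeries.coeff_rescale,
      mul_comm ((H.n : ℂ)) ((F.n : ℂ))]
  have hshift : ∀ j l : ℕ, kf (j + 1) (l + 1) = kf j l := by
    intro j l
    refine hkfeq (j + 1) (l + 1) (kf j l) ?_ ?_
    · rw [hζA j _, hζD l _]
      intro heq
      exact hkfspec j l (mul_left_cancel₀ (pow_ne_zero _ (Complex.exp_ne_zero _)) heq)
    · intro i hi
      rw [hζA j i, hζD l i, hkfmin j l i hi]
  have hperFn : aser F H.n (0 + F.n) = aser F H.n 0 :=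
    aser_congr F H.n hN _ _ ⟨1, by push_cast; ring⟩
  have hkfperA : ∀ l : ℕ, kf (0 + F.n) l = kf 0 l := by
    intro l
    refine hkfeq (0 + F.n) l (kf 0 l) ?_ ?_
    · rw [hperFn]; exact hkfspec 0 l
    · intro i hi; rw [hperFn]; exact hkfmin 0 l i hi
  obtain ⟨nm, hnmdef⟩ : ∃ nm, F.n = nm + 1 := ⟨F.n - 1, by omega⟩
  have hSl : ∀ l, ∑ j ∈ Finset.range F.n, kf j l = ∑ j ∈ Finset.range F.n, kf j 0 := by
    intro l
    induction l with
    | zero => rfl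
    | succ l ih =>
      rw [← ih, hnmdef, Finset.sum_range_succ', Finset.sum_range_succ]
      have e1 : ∑ j ∈ Finset.range nm, kf (j + 1) (l + 1) = ∑ j ∈ Finset.range nm, kf j l :=
        Finset.sum_congr rfl fun j _ => hshift j l
      have e2 : kf 0 (l + 1) = kf nm l := by
        have h2 := hkfperA (l + 1)
        rw [hnmdef] at h2
        rw [show (0 : ℕ) + (nm + 1) = nm + 1 by omega] at h2
        rw [← h2, hshift nm l]
      rw [e1, e2]
  -- the value of the sum
  have hVQ : (∑ j ∈ Finset.range F.n, (kf j 0 : ℚ))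
      = (F.n : ℚ) * (((n₁ - 1) * F.beta 1 + lam : ℕ) : ℚ) := by
    have h0 : F.inter H = (((∑ p : Fin F.n × Fin H.n,
        ((kf p.1 p.2 : ℚ) / ((F.n : ℚ) * (H.n : ℚ)))) : ℚ) : WithTop ℚ) := by
      rw [Branch.inter, ← withtop_sum_coe]
      exact Finset.sum_congr rfl fun p _ => hrdo p.1 p.2
    rw [hI] at h0
    have h1 : (∑ p : Fin F.n × Fin H.n, ((kf p.1 p.2 : ℚ) / ((F.n : ℚ) * (H.n : ℚ))))
        = (((n₁ - 1) * F.beta 1 + lam : ℕ) : ℚ) := by exact_mod_cast h0.symm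
    rw [Fintype.sum_prod_type] at h1
    rw [Fin.sum_univ_eq_sum_range (fun j => ∑ l : Fin H.n,
      ((kf j l : ℚ) / ((F.n : ℚ) * (H.n : ℚ)))) F.n] at h1
    have h2 : ∀ j : ℕ, (∑ l : Fin H.n, ((kf j l : ℚ) / ((F.n : ℚ) * (H.n : ℚ))))
        = ∑ l ∈ Finset.range H.n, ((kf j l : ℚ) / ((F.n : ℚ) * (H.n : ℚ))) := fun j =>
      Fin.sum_univ_eq_sum_range (fun l => ((kf j l : ℚ) / ((F.n : ℚ) * (H.n : ℚ)))) H.n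
    rw [Finset.sum_congr rfl fun j _ => h2 j] at h1
    rw [Finset.sum_comm] at h1
    have h3 : ∀ l ∈ Finset.range H.n, (∑ j ∈ Finset.range F.n,
        ((kf j l : ℚ) / ((F.n : ℚ) * (H.n : ℚ))))
        = (∑ j ∈ Finset.range F.n, (kf j 0 : ℚ)) / ((F.n : ℚ) * (H.n : ℚ)) := by
      intro l _
      have hc : (∑ j ∈ Finset.range F.n, (kf j l : ℚ))
          = (∑ j ∈ Finset.range F.n, (kf j 0 : ℚ)) := by
        exact_mod_cast congrArg (Nat.cast (R := ℚ)) (hSl l)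
      rw [← Finset.sum_div, hc]
    rw [Finset.sum_congr rfl h3, Finset.sum_const, Finset.card_range, nsmul_eq_mul] at h1
    have hnq : (F.n : ℚ) ≠ 0 := Nat.cast_ne_zero.mpr hn.ne'
    have hNq : (H.n : ℚ) ≠ 0 := Nat.cast_ne_zero.mpr hN.ne'
    have h1' : (H.n : ℚ) * (∑ j ∈ Finset.range F.n, (kf j 0 : ℚ))
        = (((n₁ - 1) * F.beta 1 + lam : ℕ) : ℚ) * ((F.n : ℚ) * (H.n : ℚ)) := by
      rw [← h1]
      field_simp
    refine mul_left_cancel₀ hNq ?_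
    rw [h1']
    ring
  -- constant kf value forces the intersection value
  have hnq : (F.n : ℚ) ≠ 0 := Nat.cast_ne_zero.mpr hn.ne'
  have hkfconst : ∀ c : ℕ, (∀ j : ℕ, kf j 0 = c) → c = (n₁ - 1) * F.beta 1 + lam := by
    intro c hc
    have hS : (∑ j ∈ Finset.range F.n, (kf j 0 : ℚ)) = (F.n : ℚ) * (c : ℚ) := by
      rw [Finset.sum_congr rfl fun j _ => by rw [hc j]]
      rw [Finset.sum_const, Finset.card_range, nsmul_eq_mul]
    rw [hS] at hVQ
    exact_mod_cast mul_left_cancel₀ hnq hVQ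
  have hid : (n₁ - 1) * F.beta 1 + F.beta 1 = n₁ * F.beta 1 := by
    conv_rhs => rw [show n₁ = (n₁ - 1) + 1 by omega]
    ring
  have hβHn : F.beta 1 * H.n = n₁ * F.beta 1 := by rw [hHn]; ring
  have hAzero : ∀ j k : ℕ, k < F.beta 1 * H.n → PowerSeries.coeff (R := ℂ) k (aser F H.n j) = 0 := by
    intro j k hk
    rw [aser_coeff F H.n hN]
    split
    · rw [halow (k / H.n) (by rwa [Nat.div_lt_iff_lt_mul hN]), zero_mul]
    · rfl
  have hAat : ∀ j : ℕ, PowerSeries.coeff (R := ℂ) (F.beta 1 * H.n) (aser F H.n j) ≠ 0 := by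
    intro j
    rw [aser_coeff F H.n hN, if_pos ⟨F.beta 1, mul_comm _ _⟩, Nat.mul_div_cancel _ hN]
    exact mul_ne_zero haβ (Complex.exp_ne_zero _)
  have hHY : H.paramY.order = (m₁ : ℕ∞) := by
    by_cases hy0 : H.paramY = 0
    · exfalso
      have hDzero : ∀ l k : ℕ, PowerSeries.coeff (R := ℂ) k (aser H F.n l) = 0 := by
        intro l k
        rw [aser_coeff H F.n hn]
        split
        · have ha0 : H.a (k / F.n) = 0 := by
            have := congrArg (PowerSeries.coeff (R := ℂ) (k / F.n)) hy0
            simpa [Branch.paramY] using this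
          rw [ha0, zero_mul]
        · rfl
      have hkfv : ∀ j : ℕ, kf j 0 = F.beta 1 * H.n := by
        intro j
        refine hkfeq j 0 _ ?_ ?_
        · rw [hDzero]; exact hAat j
        · intro i hi; rw [hDzero, hAzero j i hi]
      have hceq := hkfconst _ hkfv
      rw [hβHn, ← hid] at hceq
      have := Nat.add_left_cancel hceq
      omega
    · have hfin : H.paramY.order ≠ ⊤ := by rwa [ne_eq, PowerSeries.order_eq_top]
      obtain ⟨V', hV'⟩ := WithTop.ne_top_iff_exists.mp hfin
      have hV'2 := PowerSeries.order_eq_nat.mp hV'.symm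
      have hbV : H.a V' ≠ 0 := by
        simpa [Branch.paramY, PowerSeries.coeff_mk] using hV'2.1
      have hblow : ∀ i < V', H.a i = 0 := by
        intro i hi
        simpa [Branch.paramY, PowerSeries.coeff_mk] using hV'2.2 i hi
      have hDzero : ∀ l k : ℕ, k < V' * F.n → PowerSeries.coeff (R := ℂ) k (aser H F.n l) = 0 := by
        intro l k hk
        rw [aser_coeff H F.n hn]
        split
        · rw [hblow (k / F.n) (by rwa [Nat.div_lt_iff_lt_mul hn]), zero_mul]
        · rfl
      have hDat : ∀ l : ℕ, PowerSeries.coeff (R := ℂ) (V' * F.n) (aser H F.n l) ≠ 0 := by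
        intro l
        rw [aser_coeff H F.n hn, if_pos ⟨V', mul_comm _ _⟩, Nat.mul_div_cancel _ hn]
        exact mul_ne_zero hbV (Complex.exp_ne_zero _)
      suffices hVm : V' = m₁ by
        rw [← hV', hVm]
        rfl
      rcases Nat.lt_trichotomy (V' * F.n) (F.beta 1 * H.n) with hc | hc | hc
      · exfalso
        have hkfv : ∀ j : ℕ, kf j 0 = V' * F.n := by
          intro j
          refine hkfeq j 0 _ ?_ ?_
          · rw [hAzero j _ hc]
            exact Ne.symm (hDat 0)
          · intro i hi
            rw [hAzero j i (lt_trans hi hc), hDzero 0 i hi]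
        have hceq := hkfconst _ hkfv
        rw [hβHn, ← hid] at hc
        linarith [hc, hceq, hlam]
      · have h2 : V' * F.n = m₁ * F.n := by
          rw [hc, hHn, ← hm₁e, ← hn₁e]; ring
        exact Nat.eq_of_mul_eq_mul_right hn h2
      · exfalso
        have hkfv : ∀ j : ℕ, kf j 0 = F.beta 1 * H.n := by
          intro j
          refine hkfeq j 0 _ ?_ ?_
          · rw [hDzero 0 _ hc]
            exact hAat j
          · intro i hi
            rw [hAzero j i hi, hDzero 0 i (lt_trans hi hc)]
        have hceq := hkfconst _ hkfv
        rw [hβHn, ← hid] at hceq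
        have := Nat.add_left_cancel hceq
        omega
  have haX : H.paramX.order = (n₁ : ℕ∞) := by
    rw [Branch.paramX, PowerSeries.order_X_pow, hHn]
  -- part (b)
  have hNNpos : 0 < F.n * H.n := Nat.mul_pos hn hN
  have hfm : f.Monic := hW.1
  have hfdeg : f.natDegree = F.n := hW.2.1
  have hfmMonic : (f.map (phiHom (F.n * H.n) hNNpos)).Monic := hfm.map _
  have hfmdeg : (f.map (phiHom (F.n * H.n) hNNpos)).natDegree = F.n := by
    rw [hfm.natDegree_map, hfdeg]
  have hcompN : (phiHom H.n hN).comp (phiHom F.n hn) = phiHom (F.n * H.n) hNNpos :=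
    RingHom.ext fun g => phiFun_comp H.n F.n hN hn g
  have hroot : ∀ j : ℕ, Polynomial.eval₂ (phiHom (F.n * H.n) hNNpos) (aser F H.n j) f = 0 := by
    intro j
    induction j with
    | zero =>
      have h0 : f.eval₂ (phiHom F.n hn) F.paramY = 0 := by
        rw [← pullbackW_eq_eval₂ F.n hn]
        exact hdef
      have h1 := congrArg (phiHom H.n hN) h0
      rw [Polynomial.hom_eval₂, hcompN, map_zero] at h1
      rwa [show (phiHom H.n hN) F.paramY = aser F H.n 0 from by
        rw [phiHom_apply, Branch.paramY]
        exact (aser_zero F H.n hN).symm] at h1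
    | succ j ih =>
      have h1 := congrArg
        (PowerSeries.rescale (Complex.exp (2 * (Real.pi : ℂ) * Complex.I
          / (((F.n * H.n : ℕ)) : ℂ)))) ih
      rw [map_zero, Polynomial.hom_eval₂] at h1
      have hfix : (PowerSeries.rescale (Complex.exp (2 * (Real.pi : ℂ) * Complex.I
          / (((F.n * H.n : ℕ)) : ℂ)))).comp (phiHom (F.n * H.n) hNNpos)
          = phiHom (F.n * H.n) hNNpos :=
        RingHom.ext fun g => phiFun_rescale_fix (F.n * H.n) hNNpos g
      have hres : PowerSeries.rescale (Complex.exp (2 * (Real.pi : ℂ) * Complex.I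
          / (((F.n * H.n : ℕ)) : ℂ))) (aser F H.n j) = aser F H.n (j + 1) := by
        rw [show (((F.n * H.n : ℕ)) : ℂ) = (F.n : ℂ) * (H.n : ℂ) from by push_cast; ring]
        exact aser_rescale F H.n hN j
      rwa [hfix, hres] at h1
  have hfact : f.map (phiHom (F.n * H.n) hNNpos)
      = ∏ j ∈ Finset.range F.n, (Polynomial.X - Polynomial.C (aser F H.n j)) := by
    refine monic_factorization F.n _ hfmMonic hfmdeg _ (fun j hj => ?_)
      (fun j j' hj hj' hne => aser_injective F H.n hN j j' hj hj' hne)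
    rw [Polynomial.IsRoot, Polynomial.eval_map]
    exact hroot j
  have hφP : phiFun F.n (pullbackWeierstrass n₁ H.paramY f)
      = (f.map (phiHom (F.n * H.n) hNNpos)).eval (aser H F.n 0) := by
    rw [pullbackW_eq_eval₂ n₁ hn₁pos]
    have h1 : phiHom F.n hn (f.eval₂ (phiHom n₁ hn₁pos) H.paramY)
        = f.eval₂ ((phiHom F.n hn).comp (phiHom n₁ hn₁pos)) (phiHom F.n hn H.paramY) :=
      Polynomial.hom_eval₂ _ _ _ _
    have hcomp2 : (phiHom F.n hn).comp (phiHom n₁ hn₁pos) = phiHom (F.n * H.n) hNNpos := by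
      refine RingHom.ext fun g => ?_
      show phiFun F.n (phiFun n₁ g) = phiFun (F.n * H.n) g
      rw [phiFun_comp F.n n₁ hn hn₁pos g, hHn, Nat.mul_comm]
    have hD0 : phiHom F.n hn H.paramY = aser H F.n 0 := by
      rw [phiHom_apply, Branch.paramY]
      exact (aser_zero H F.n hn).symm
    show phiHom F.n hn (f.eval₂ (phiHom n₁ hn₁pos) H.paramY) = _
    rw [h1, hcomp2, hD0, Polynomial.eval_map]
  have hevalprod : (f.map (phiHom (F.n * H.n) hNNpos)).eval (aser H F.n 0)
      = ∏ j ∈ Finset.range F.n, (aser H F.n 0 - aser F H.n j) := by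
    rw [hfact, Polynomial.eval_prod]
    exact Finset.prod_congr rfl fun j _ => by simp
  have hordφP : (phiFun F.n (pullbackWeierstrass n₁ H.paramY f)).order
      = ((∑ j ∈ Finset.range F.n, kf j 0 : ℕ) : ℕ∞) := by
    rw [hφP, hevalprod, order_prod, Nat.cast_sum]
    exact Finset.sum_congr rfl fun j _ => hordAD j 0
  have hSV : (∑ j ∈ Finset.range F.n, kf j 0) = F.n * ((n₁ - 1) * F.beta 1 + lam) := by
    exact_mod_cast hVQ
  have hPord : (pullbackWeierstrass n₁ H.paramY f).order
      = (((n₁ - 1) * F.beta 1 + lam : ℕ) : ℕ∞) := by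
    rw [PowerSeries.order_eq_nat]
    have h2 : (phiFun F.n (pullbackWeierstrass n₁ H.paramY f)).order
        = ((F.n * ((n₁ - 1) * F.beta 1 + lam) : ℕ) : ℕ∞) := by rw [hordφP, hSV]
    have h3 := PowerSeries.order_eq_nat.mp h2
    constructor
    · have h4 := h3.1
      rwa [phiFun_coeff_mul F.n hn] at h4
    · intro i hi
      have h4 := h3.2 (F.n * i) ((Nat.mul_lt_mul_left hn).mpr hi)
      rwa [phiFun_coeff_mul F.n hn] at h4
  obtain ⟨A, hAdeg, hAeq⟩ := hadic_expansion h hmonic n₁ hn₁pos hdeg e₁ f hfm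
    (by rw [hfdeg, ← hn₁e]; ring)
  have hh0 : h.eval₂ (phiHom n₁ hn₁pos) H.paramY = 0 := by
    rw [← pullbackW_eq_eval₂ n₁ hn₁pos]
    exact hhdef
  have hPA : pullbackWeierstrass n₁ H.paramY f = pullbackWeierstrass n₁ H.paramY (A 0) := by
    rw [pullbackW_eq_eval₂ n₁ hn₁pos, pullbackW_eq_eval₂ n₁ hn₁pos]
    conv_lhs => rw [hAeq]
    rw [Polynomial.eval₂_add, Polynomial.eval₂_pow, hh0, zero_pow he₁pos.ne', zero_add,
      Polynomial.eval₂_finset_sum]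
    rw [Finset.sum_eq_single 0]
    · rw [Polynomial.eval₂_mul, Polynomial.eval₂_pow, pow_zero, mul_one]
    · intro k hk hkne
      rw [Polynomial.eval₂_mul, Polynomial.eval₂_pow, hh0, zero_pow hkne, mul_zero]
    · intro h0
      exact absurd (Finset.mem_range.mpr he₁pos) h0
  -- part (c)
  haveI : NeZero n₁ := ⟨hn₁pos.ne'⟩
  set Vc : ℕ := (n₁ - 1) * F.beta 1 + lam with hVc
  set q : ℕ := (((Vc : ZMod n₁)) * ((m₁ : ZMod n₁))⁻¹).val with hqdef
  have hqlt : q < n₁ := ZMod.val_lt _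
  have hunit : IsUnit ((m₁ : ZMod n₁)) := by
    rw [ZMod.isUnit_iff_coprime]
    exact hcop.symm
  have hqm : ((q * m₁ : ℕ) : ZMod n₁) = (Vc : ZMod n₁) := by
    push_cast
    rw [hqdef, ZMod.natCast_val, ZMod.cast_id]
    rw [mul_assoc, ZMod.inv_mul_of_unit _ hunit, mul_one]
  have hmod : Vc ≡ q * m₁ [MOD n₁] := (ZMod.natCast_eq_natCast_iff _ _ _).mp hqm.symm
  have hle : q * m₁ ≤ Vc := by
    have h1 : q * m₁ ≤ (n₁ - 1) * m₁ := Nat.mul_le_mul_right _ (by omega)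
    have h2 : (n₁ - 1) * m₁ ≤ (n₁ - 1) * F.beta 1 := Nat.mul_le_mul_left _ (by
      calc m₁ = m₁ * 1 := by ring
      _ ≤ m₁ * e₁ := Nat.mul_le_mul_left _ he₁pos
      _ = F.beta 1 := hm₁e)
    calc q * m₁ ≤ (n₁ - 1) * F.beta 1 := le_trans h1 h2
    _ ≤ Vc := by rw [hVc]; omega
  obtain ⟨p, hp⟩ := (Nat.modEq_iff_dvd' hle).mp hmod.symm
  have hpq : p * n₁ + q * m₁ = Vc := by
    rw [Nat.mul_comm p n₁]
    have := Nat.eq_add_of_sub_eq hle hp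
    omega
  exact ⟨⟨haX, hHY⟩, ⟨A, hAdeg, hAeq, by rw [← hPA]; exact hPord⟩, p, q, hqlt, hpq⟩
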